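/- Let n ≥ 2 and let {H_iα_i}_{i=1}^{s} be a coset partition of the free group F_n, where H_i < F_n has finite index d_i > 1 and α_i ∈ F_n. If there exist indices 1 ≤ j, k ≤ s with j ≠ k such that lcm(d_j, d_k) does not divide the index [F_n : ⋂_{i ≠ j,k} α_i⁻¹H_iα_i] (which is finite, being the index of a finite intersection of finite-index subgroups), then H_j = H_k; in particular d_j = d_k and the partition has multiplicity. -/
import Mathlib

/-- Auxiliary lemma: if `x ∈ H j · α j` but `x · ν₀ ∉ H j · α j` for some `ν₀` in the
partial intersection `N`, then `H j = H k`. -/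
private lemma coset_eq_aux {G : Type*} [Group G] {s : ℕ}
    (H : Fin s → Subgroup G) (α : Fin s → G)
    (hpart : ∀ x : G, ∃! i : Fin s, x * (α i)⁻¹ ∈ H i)
    (j k : Fin s) (hjk : j ≠ k)
    (N : Subgroup G)
    (hN : ∀ ν ∈ N, ∀ i, i ≠ j → i ≠ k → α i * ν * (α i)⁻¹ ∈ H i)
    (x ν₀ : G) (hx : x * (α j)⁻¹ ∈ H j) (hν₀ : ν₀ ∈ N)
    (hxν₀ : x * ν₀ * (α j)⁻¹ ∉ H j) :
    H j = H k := by
  have uniq : ∀ (z : G) (a b : Fin s), z * (α a)⁻¹ ∈ H a → z * (α b)⁻¹ ∈ H b → a = b := by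
    intro z a b ha hb
    obtain ⟨i, _, hu⟩ := hpart z
    rw [hu a ha, hu b hb]
  have hk' : x * ν₀ * (α k)⁻¹ ∈ H k := by
    obtain ⟨i, hi, _⟩ := hpart (x * ν₀)
    have hij : i ≠ j := fun h => hxν₀ (h ▸ hi)
    by_cases hik : i = k
    · exact hik ▸ hi
    · exfalso
      have h2 : x * (α i)⁻¹ ∈ H i := by
        have h3 := hN ν₀⁻¹ (inv_mem hν₀) i hij hik
        have he : x * (α i)⁻¹ = (x * ν₀ * (α i)⁻¹) * (α i * ν₀⁻¹ * (α i)⁻¹) := by group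
        rw [he]; exact mul_mem hi h3
      exact hij (uniq x i j h2 hx)
  apply le_antisymm
  · -- H j ≤ H k
    intro h hh
    obtain ⟨i, hi, _⟩ := hpart (h * x * ν₀)
    by_cases hij : i = j
    · exfalso
      subst hij
      have : x * ν₀ * (α i)⁻¹ ∈ H i := by
        have he : x * ν₀ * (α i)⁻¹ = h⁻¹ * (h * x * ν₀ * (α i)⁻¹) := by group
        rw [he]; exact mul_mem (inv_mem hh) hi
      exact hxν₀ this
    by_cases hik : i = k
    · subst hik
      have he : h = (h * x * ν₀ * (α i)⁻¹) * (x * ν₀ * (α i)⁻¹)⁻¹ := by group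
      rw [he]; exact mul_mem hi (inv_mem hk')
    · exfalso
      have h2 : h * x * (α i)⁻¹ ∈ H i := by
        have h3 := hN ν₀⁻¹ (inv_mem hν₀) i hij hik
        have he : h * x * (α i)⁻¹ = (h * x * ν₀ * (α i)⁻¹) * (α i * ν₀⁻¹ * (α i)⁻¹) := by
          group
        rw [he]; exact mul_mem hi h3
      have h4 : h * x * (α j)⁻¹ ∈ H j := by
        have he : h * x * (α j)⁻¹ = h * (x * (α j)⁻¹) := by group
        rw [he]; exact mul_mem hh hx
      exact hij (uniq (h * x) i j h2 h4)
  · -- H k ≤ H j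
    intro h hh
    have hz : h * x * ν₀ * (α k)⁻¹ ∈ H k := by
      have he : h * x * ν₀ * (α k)⁻¹ = h * (x * ν₀ * (α k)⁻¹) := by group
      rw [he]; exact mul_mem hh hk'
    obtain ⟨i, hi, _⟩ := hpart (h * x)
    by_cases hij : i = j
    · subst hij
      have he : h = (h * x * (α i)⁻¹) * (x * (α i)⁻¹)⁻¹ := by group
      rw [he]; exact mul_mem hi (inv_mem hx)
    · exfalso
      by_cases hik : i = k
      · subst hik
        have h2 : x * (α i)⁻¹ ∈ H i := by
          have he : x * (α i)⁻¹ = h⁻¹ * (h * x * (α i)⁻¹) := by group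
          rw [he]; exact mul_mem (inv_mem hh) hi
        exact hjk (uniq x j i hx h2)
      · have h2 : h * x * ν₀ * (α i)⁻¹ ∈ H i := by
          have h3 := hN ν₀ hν₀ i hij hik
          have he : h * x * ν₀ * (α i)⁻¹ = (h * x * (α i)⁻¹) * (α i * ν₀ * (α i)⁻¹) := by
            group
          rw [he]; exact mul_mem hi h3
        exact hik (uniq (h * x * ν₀) i k h2 hz)

/-- If `lcm(d j, d k)` does not divide the index of the partial intersection
`⋂_{i ≠ j,k} α_i⁻¹ H_i α_i` (for some `j ≠ k`), then `H j = H k`; in particular `d j = d k`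
and the coset partition has multiplicity. -/
theorem eq_subgroups_of_lcm_not_dvd_index
    (n s : ℕ) (hn : 2 ≤ n)
    (H : Fin s → Subgroup (FreeGroup (Fin n)))
    (α : Fin s → FreeGroup (Fin n))
    (d : Fin s → ℕ)
    (hind : ∀ i, (H i).index = d i)
    (hone : ∀ i, 1 < d i)
    (hpart : ∀ x : FreeGroup (Fin n), ∃! i : Fin s, x * (α i)⁻¹ ∈ H i)
    (j k : Fin s) (hjk : j ≠ k)
    (hdvd : ¬ (Nat.lcm (d j) (d k) ∣
        (⨅ i ∈ {i : Fin s | i ≠ j ∧ i ≠ k},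
          (H i).comap ((MulAut.conj (α i)).toMonoidHom)).index)) :
    H j = H k ∧ d j = d k ∧ ∃ i i', i ≠ i' ∧ d i = d i' := by
  set N : Subgroup (FreeGroup (Fin n)) :=
    ⨅ i ∈ {i : Fin s | i ≠ j ∧ i ≠ k},
      (H i).comap ((MulAut.conj (α i)).toMonoidHom) with hNdef
  have hmem : ∀ ν : FreeGroup (Fin n), ν ∈ N → ∀ i, i ≠ j → i ≠ k →
      α i * ν * (α i)⁻¹ ∈ H i := by
    intro ν hν i hij hik
    simp only [hNdef, Subgroup.mem_iInf, Set.mem_setOf_eq, Subgroup.mem_comap] at hν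
    have := hν i ⟨hij, hik⟩
    simpa using this
  have hindK : ∀ a : Fin s,
      ((H a).comap ((MulAut.conj (α a)).toMonoidHom)).index = d a := by
    intro a
    rw [Subgroup.index_comap_of_surjective _ (MulAut.conj (α a)).surjective]
    exact hind a
  have key : ∀ a b : Fin s, a ≠ b →
      (∀ ν ∈ N, ∀ i, i ≠ a → i ≠ b → α i * ν * (α i)⁻¹ ∈ H i) →
      ¬ (d a ∣ N.index) → H a = H b := by
    intro a b hab hNab hda
    by_cases hex : ∃ x ν₀, x * (α a)⁻¹ ∈ H a ∧ ν₀ ∈ N ∧ x * ν₀ * (α a)⁻¹ ∉ H a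
    · obtain ⟨x, ν₀, h1, h2, h3⟩ := hex
      exact coset_eq_aux H α hpart a b hab N hNab x ν₀ h1 h2 h3
    · exfalso
      push_neg at hex
      apply hda
      have hle : N ≤ (H a).comap ((MulAut.conj (α a)).toMonoidHom) := by
        intro ν hν
        have h1 : α a * (α a)⁻¹ ∈ H a := by
          simpa using (H a).one_mem
        have := hex (α a) ν h1 hν
        simpa [Subgroup.mem_comap] using this
      calc d a = ((H a).comap ((MulAut.conj (α a)).toMonoidHom)).index := (hindK a).symm
        _ ∣ N.index := Subgroup.index_dvd_of_le hle
  have hcases : ¬ (d j ∣ N.index) ∨ ¬ (d k ∣ N.index) := by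
    by_contra hcon
    push_neg at hcon
    exact hdvd (Nat.lcm_dvd hcon.1 hcon.2)
  have hHjk : H j = H k := by
    rcases hcases with h | h
    · exact key j k hjk (fun ν hν i hij hik => hmem ν hν i hij hik) h
    · exact (key k j hjk.symm (fun ν hν i hik hij => hmem ν hν i hij hik) h).symm
  refine ⟨hHjk, ?_, j, k, hjk, ?_⟩ <;> rw [← hind j, ← hind k, hHjk]
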